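/- Let G be a finite group, let v, v' : G → G be group endomorphisms, and let z : G → G be a group homomorphism with z(G) ⊆ Z(G), such that z(g)·v'(v(g)) = g for all g ∈ G. Then ker(v) is contained in an abelian direct factor of G: there exist subgroups K and N of G with K ⊆ Z(G) (so K is abelian and normal), ker(v) ⊆ K, N normal in G, K ∩ N = 1, and G = K·N. -/

import Mathlib

/-- In a finite monoid, every element has an idempotent positive power. -/
lemma exists_idempotent_pow_aux {M : Type*} [Monoid M] [Finite M] (a : M) :
    ∃ n : ℕ, 0 < n ∧ a ^ n * a ^ n = a ^ n := by
  obtain ⟨i, j, hne, hij⟩ := Finite.exists_ne_map_eq_of_infinite (fun n : ℕ => a ^ n)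
  wlog hlt : i < j generalizing i j
  · exact this j i hne.symm hij.symm (by omega)
  set m := j - i with hm
  have hm1 : 0 < m := by omega
  have hbase : a ^ (i + m) = a ^ i := by
    have : i + m = j := by omega
    rw [this]; exact hij.symm
  have key : ∀ d t : ℕ, a ^ (i + d + t * m) = a ^ (i + d) := by
    intro d t
    induction t with
    | zero => simp
    | succ t ih =>
        have : i + d + (t + 1) * m = (i + m) + (d + t * m) := by ring
        rw [this, pow_add, hbase, ← pow_add]
        have : i + (d + t * m) = i + d + t * m := by ring
        rw [this, ih]
  refine ⟨m * (i + 1), by positivity, ?_⟩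
  have hge : i ≤ m * (i + 1) := by nlinarith
  obtain ⟨d, hd⟩ := Nat.exists_eq_add_of_le hge
  have h2 : m * (i + 1) + m * (i + 1) = i + d + (i + 1) * m := by
    nth_rewrite 2 [hd]; ring
  rw [← pow_add, h2, key, ← hd]

theorem ker_in_abelian_direct_factor {G : Type*} [Group G] [Finite G]
    (v v' z : G →* G)
    (hz : ∀ g : G, z g ∈ Subgroup.center G)
    (hsplit : ∀ g : G, z g * v' (v g) = g) :
    ∃ K N : Subgroup G, K ≤ Subgroup.center G ∧ v.ker ≤ K ∧ N.Normal ∧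
      K ⊓ N = ⊥ ∧ ∀ g : G, ∃ k ∈ K, ∃ n ∈ N, g = k * n := by
  set u : Monoid.End G := (v'.comp v : G →* G) with hu
  have hu1 : ∀ g : G, u g = (z g)⁻¹ * g := by
    intro g
    exact eq_inv_mul_iff_mul_eq.mpr (hsplit g)
  -- u commutes with conjugation
  have hconj : ∀ (h g : G), u (h * g * h⁻¹) = h * u g * h⁻¹ := by
    intro h g
    rw [hu1, hu1]
    have hcz : ∀ x y : G, z x * y = y * z x := fun x y =>
      (Subgroup.mem_center_iff.mp (hz x) y).symm
    have : z (h * g * h⁻¹) = z g := by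
      rw [map_mul, map_mul, map_inv]
      rw [hcz h (z g)]
      group
    rw [this]
    have hcinv : h * (z g)⁻¹ = (z g)⁻¹ * h :=
      Subgroup.mem_center_iff.mp (Subgroup.inv_mem _ (hz g)) h
    conv_rhs => rw [← mul_assoc, hcinv]
    group
  -- powers of u commute with conjugation
  have hconjp : ∀ (k : ℕ) (h g : G), (u ^ k) (h * g * h⁻¹) = h * (u ^ k) g * h⁻¹ := by
    intro k
    induction k with
    | zero => intro h g; simp
    | succ k ih =>
        intro h g
        rw [pow_succ, Monoid.End.coe_mul, Function.comp_apply, Function.comp_apply,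
          hconj, ih]
  -- kernels of powers of u are central
  have hker : ∀ k : ℕ, ∀ g : G, (u ^ k) g = 1 → g ∈ Subgroup.center G := by
    intro k
    induction k with
    | zero => intro g hg; simp at hg; rw [hg]; exact Subgroup.one_mem _
    | succ k ih =>
        intro g hg
        rw [pow_succ, Monoid.End.coe_mul, Function.comp_apply] at hg
        have hugc : u g ∈ Subgroup.center G := ih _ hg
        have : g = z g * u g := by rw [hu1]; group
        rw [this]
        exact mul_mem (hz g) hugc
  haveI : Finite (Monoid.End G) :=
    Finite.of_injective (fun f : Monoid.End G => (f : G → G)) DFunLike.coe_injective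
  obtain ⟨n, hn0, hidem⟩ := exists_idempotent_pow_aux u
  set e : Monoid.End G := u ^ n with he
  have hee : ∀ g : G, e (e g) = e g := by
    intro g
    have : e * e = e := hidem
    calc e (e g) = (e * e) g := rfl
    _ = e g := by rw [this]
  refine ⟨(e : G →* G).ker, (e : G →* G).range, ?_, ?_, ?_, ?_, ?_⟩
  · intro g hg
    exact hker n g hg
  · intro g hg
    have hvg : v g = 1 := hg
    have hug : u g = 1 := by rw [hu]; show v' (v g) = 1; rw [hvg, map_one]
    show e g = 1
    obtain ⟨m, rfl⟩ := Nat.exists_eq_succ_of_ne_zero hn0.ne'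
    rw [he, pow_succ, Monoid.End.coe_mul, Function.comp_apply, hug, map_one]
  · constructor
    intro x hx h
    obtain ⟨y, rfl⟩ := hx
    exact ⟨h * y * h⁻¹, hconjp n h y⟩
  · rw [eq_bot_iff]
    rintro g ⟨hgK, hgN⟩
    obtain ⟨y, rfl⟩ := hgN
    have h1 : e (e y) = 1 := hgK
    rw [hee] at h1
    exact Subgroup.mem_bot.mpr h1
  · intro g
    refine ⟨g * (e g)⁻¹, ?_, e g, ⟨g, rfl⟩, by group⟩
    show e (g * (e g)⁻¹) = 1
    rw [map_mul, map_inv, hee]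
    group
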